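/- Let k be a field and C a k-linear additive category which is idempotent complete and in which every Hom-space is finite-dimensional over k. Then for objects A, B, C' of C: (a) if A ⊕ B ≅ A ⊕ C' then B ≅ C'; and (b) if B^{⊕n} ≅ C'^{⊕n} for some integer n ≥ 1, then B ≅ C'. -/

import Mathlib

/-!
Statement 9: In a `k`-linear, idempotent complete additive category with finite-dimensional
Hom-spaces, the Krull–Schmidt cancellation laws hold:
(a) `A ⊕ B ≅ A ⊕ C'` implies `B ≅ C'`;
(b) `B^{⊕n} ≅ C'^{⊕n}` for some `n ≥ 1` implies `B ≅ C'`.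
-/

open CategoryTheory CategoryTheory.Limits Module

set_option linter.unusedSectionVars false
set_option maxHeartbeats 1000000

/-! ### Ring-theoretic lemmas -/

theorem ks_mul_eq_one_comm (k : Type*) [Field k] {R : Type*} [Ring R] [Algebra k R]
    [FiniteDimensional k R] {a b : R} (h : a * b = 1) : b * a = 1 := by
  have hinj : Function.Injective (LinearMap.mulLeft k b) := by
    intro x y hxy
    have h2 := congrArg (a * ·) hxy
    simpa [LinearMap.mulLeft_apply, ← mul_assoc, h] using h2
  obtain ⟨c, hc⟩ := (LinearMap.injective_iff_surjective).mp hinj 1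
  simp only [LinearMap.mulLeft_apply] at hc
  have hac : a = c := by
    calc a = a * (b * c) := by rw [hc, mul_one]
    _ = a * b * c := by rw [← mul_assoc]
    _ = c := by rw [h, one_mul]
  rw [hac]; exact hc

theorem ks_isUnit_of_mul_eq_one (k : Type*) [Field k] {R : Type*} [Ring R] [Algebra k R]
    [FiniteDimensional k R] {a b : R} (h : a * b = 1) : IsUnit a :=
  ⟨⟨a, b, h, ks_mul_eq_one_comm k h⟩, rfl⟩

theorem ks_pow_mul_pow {R : Type*} [Ring R] {a c : R} {n : ℕ}
    (h : a ^ (n + 1) * c = a ^ n) : ∀ m, a ^ (n + m) * c ^ m = a ^ n := by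
  intro m
  induction m with
  | zero => simp
  | succ m ih =>
    have e1 : n + (m + 1) = m + (n + 1) := by omega
    calc a ^ (n + (m + 1)) * c ^ (m + 1)
        = (a ^ m * a ^ (n + 1)) * (c * c ^ m) := by rw [e1, pow_add a m (n + 1), pow_succ' c m]
      _ = a ^ m * ((a ^ (n + 1) * c) * c ^ m) := by
          rw [mul_assoc, ← mul_assoc (a ^ (n + 1))]
      _ = a ^ m * (a ^ n * c ^ m) := by rw [h]
      _ = a ^ (n + m) * c ^ m := by rw [← mul_assoc, ← pow_add, add_comm m n]
      _ = a ^ n := ih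

/-- Fitting-type dichotomy: in a finite-dimensional algebra with no nontrivial idempotents,
every element is a unit or nilpotent. -/
theorem ks_fitting (k : Type*) [Field k] {R : Type*} [Ring R] [Algebra k R]
    [FiniteDimensional k R] (a : R)
    (hid : ∀ e : R, e * e = e → e = 0 ∨ e = 1) : IsUnit a ∨ IsNilpotent a := by
  set S := Algebra.adjoin k ({a} : Set R) with hS
  letI : CommRing S := Algebra.adjoinCommRingOfComm k (by
    rintro x hx y hy
    simp only [Set.mem_singleton_iff] at hx hy
    subst hx; subst hy; rfl)
  haveI : FiniteDimensional k S :=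
    FiniteDimensional.of_injective S.val.toLinearMap Subtype.val_injective
  haveI : IsArtinianRing S := IsArtinianRing.of_finite k S
  set a' : S := ⟨a, Algebra.self_mem_adjoin_singleton k a⟩ with ha'
  obtain ⟨n, y, hy⟩ := IsArtinian.exists_pow_succ_smul_dvd a' (1 : S)
  rw [smul_eq_mul, smul_eq_mul, mul_one] at hy
  set c : R := (y : R) with hcdef
  have hc : Commute a c := Algebra.commute_of_mem_adjoin_self y.2
  have h' : a ^ (n + 1) * c = a ^ n := by
    have := congrArg (Subtype.val : S → R) hy
    push_cast at this
    simpa using this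
  have hkey := ks_pow_mul_pow h'
  set e : R := a ^ n * c ^ n with he
  have hcomm : c ^ n * a ^ n = a ^ n * c ^ n := ((hc.pow_pow n n)).symm.eq
  have hee : e * e = e := by
    calc e * e = a ^ n * (c ^ n * a ^ n) * c ^ n := by
          rw [he]; noncomm_ring
      _ = (a ^ (n + n) * c ^ n) * c ^ n := by rw [hcomm, ← mul_assoc, ← pow_add]
      _ = a ^ n * c ^ n := by rw [hkey n]
      _ = e := he.symm
  rcases hid e hee with h0 | h1
  · right
    have han : a ^ n = 0 := by
      have : a ^ n * e = a ^ n := by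
        rw [he, ← mul_assoc, ← pow_add]; exact hkey n
      rw [h0, mul_zero] at this; exact this.symm
    exact ⟨n + 1, by rw [pow_succ, han, zero_mul]⟩
  · left
    cases n with
    | zero =>
      have h0 : a * c = 1 := by simpa using h'
      exact ks_isUnit_of_mul_eq_one k h0
    | succ m =>
      have : a * (a ^ m * c ^ (m + 1)) = 1 := by
        rw [← mul_assoc, ← pow_succ']
        rw [he] at h1; exact h1
      exact ks_isUnit_of_mul_eq_one k this

/-- If a finite sum is a unit and every element is a unit or nilpotent, some summand is a unit. -/
theorem ks_sum_isUnit {R : Type*} [Ring R] [Nontrivial R]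
    (hdi : ∀ a : R, IsUnit a ∨ IsNilpotent a)
    {ι : Type*} (v : ι → R) (s : Finset ι) (h : IsUnit (∑ i ∈ s, v i)) :
    ∃ i ∈ s, IsUnit (v i) := by
  induction s using Finset.cons_induction with
  | empty => simp only [Finset.sum_empty] at h; exact absurd h not_isUnit_zero
  | cons a s ha ih =>
    rw [Finset.sum_cons] at h
    obtain ⟨u, hu⟩ := h
    rcases hdi ((↑u⁻¹ : R) * v a) with h1 | h2
    · refine ⟨a, Finset.mem_cons_self a s, ?_⟩
      have : (↑u : R) * ((↑u⁻¹ : R) * v a) = v a := by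
        rw [← mul_assoc, Units.mul_inv, one_mul]
      exact this ▸ (u.isUnit.mul h1)
    · have hrest : IsUnit (∑ i ∈ s, v i) := by
        have h3 : (↑u : R) * (1 - (↑u⁻¹ : R) * v a) = ∑ i ∈ s, v i := by
          rw [mul_sub, mul_one, ← mul_assoc, Units.mul_inv, one_mul, hu]
          abel
        exact h3 ▸ (u.isUnit.mul h2.isUnit_one_sub)
      obtain ⟨i, his, hi⟩ := ih hrest
      exact ⟨i, Finset.mem_cons_of_mem his, hi⟩

/-! ### Endomorphism-ring bridges -/

section EndLemmas

variable {k : Type*} [Field k] {C : Type*} [Category C] [Preadditive C] [Linear k C]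
  [∀ X Y : C, FiniteDimensional k (X ⟶ Y)]

def ksEnd {A : C} (f : A ⟶ A) : End A := f

noncomputable instance (A : C) : FiniteDimensional k (End A) :=
  inferInstanceAs (FiniteDimensional k (A ⟶ A))

theorem ks_isIso_of_isUnit {A : C} {x : End A} (h : IsUnit x) : IsIso (x : A ⟶ A) := by
  obtain ⟨u, hu⟩ := h
  exact ⟨u.inv, by show u.inv * x = 1; rw [← hu]; exact u.inv_val,
    by show x * u.inv = 1; rw [← hu]; exact u.val_inv⟩

theorem ks_isIso_of_right_inv (k : Type*) [Field k] {C : Type*} [Category C] [Preadditive C]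
    [Linear k C] [∀ X Y : C, FiniteDimensional k (X ⟶ Y)]
    {A : C} {x t : A ⟶ A} (h : x ≫ t = 𝟙 A) : IsIso x := by
  have h' : ksEnd t * ksEnd x = 1 := h
  have h'' : ksEnd x * ksEnd t = 1 := ks_mul_eq_one_comm k h'
  exact ks_isIso_of_isUnit ⟨⟨ksEnd x, ksEnd t, h'', h'⟩, rfl⟩

end EndLemmas

/-! ### Categorical lemmas -/

section CatLayer

variable {k : Type*} [Field k] {C : Type*} [Category C] [Preadditive C] [Linear k C]
  [HasBinaryBiproducts C] [∀ X Y : C, FiniteDimensional k (X ⟶ Y)]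

include k in
/-- Core cancellation: if `End A` has no nontrivial idempotents, then `A` cancels. -/
theorem ks_cancel_core {A B C' : C}
    (hid : ∀ e : A ⟶ A, e ≫ e = e → e = 0 ∨ e = 𝟙 A)
    (f : A ⊞ B ≅ A ⊞ C') : Nonempty (B ≅ C') := by
  have hdi : ∀ a : End A, IsUnit a ∨ IsNilpotent a := fun a =>
    ks_fitting k a (fun e he => hid e he)
  set x : A ⟶ A := biprod.inl ≫ f.hom ≫ biprod.fst with hx
  set t : A ⟶ A := biprod.inl ≫ f.inv ≫ biprod.fst with ht
  set s0 : A ⟶ C' := biprod.inl ≫ f.hom ≫ biprod.snd with hs0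
  set r0 : C' ⟶ A := biprod.inr ≫ f.inv ≫ biprod.fst with hr0
  have key : x ≫ t + s0 ≫ r0 = 𝟙 A := by
    have h0 : biprod.inl ≫ f.hom ≫ f.inv ≫ biprod.fst = 𝟙 A := by simp
    calc x ≫ t + s0 ≫ r0
        = biprod.inl ≫ f.hom ≫
            ((biprod.fst ≫ biprod.inl + biprod.snd ≫ biprod.inr) ≫ f.inv ≫ biprod.fst) := by
          simp only [hx, ht, hs0, hr0, Preadditive.add_comp, Preadditive.comp_add,
            Category.assoc]
      _ = 𝟙 A := by rw [biprod.total]; simpa using h0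
  rcases hdi (ksEnd (x ≫ t)) with hu | hn
  · obtain ⟨u, hu'⟩ := hu
    have hri : x ≫ (t ≫ (u.inv : A ⟶ A)) = 𝟙 A := by
      rw [← Category.assoc]
      show ksEnd u.inv * ksEnd (x ≫ t) = 1
      rw [← hu']; exact u.inv_val
    have : IsIso x := ks_isIso_of_right_inv k hri
    haveI : IsIso (biprod.inl ≫ f.hom ≫ biprod.fst) := hx ▸ this
    exact ⟨Biprod.isoElim f⟩
  · have hsr : s0 ≫ r0 = 𝟙 A - x ≫ t := by rw [← key]; abel
    have hu2 : IsUnit (ksEnd (s0 ≫ r0)) := by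
      have h2 : ksEnd (s0 ≫ r0) = 1 - ksEnd (x ≫ t) := hsr
      rw [h2]; exact hn.isUnit_one_sub
    haveI hIso : IsIso (s0 ≫ r0) := ks_isIso_of_isUnit hu2
    set r : C' ⟶ A := r0 ≫ inv (s0 ≫ r0) with hrr
    have hsr1 : s0 ≫ r = 𝟙 A := by
      rw [hrr, ← Category.assoc, IsIso.hom_inv_id]
    have hsr1' := reassoc_of% hsr1
    set ψ : A ⊞ C' ⟶ A ⊞ C' :=
      biprod.desc (s0 ≫ biprod.inr) (r ≫ biprod.inl + biprod.inr - r ≫ s0 ≫ biprod.inr)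
      with hψ
    have hψψ : ψ ≫ ψ = 𝟙 (A ⊞ C') := by
      apply biprod.hom_ext' <;>
        simp [hψ, Preadditive.add_comp, Preadditive.comp_add, Preadditive.sub_comp,
          Preadditive.comp_sub, hsr1, hsr1']
    haveI : IsIso ψ := ⟨ψ, hψψ, hψψ⟩
    have hψfst : ψ ≫ biprod.fst = biprod.snd ≫ r := by
      apply biprod.hom_ext' <;>
        simp [hψ, Preadditive.add_comp, Preadditive.sub_comp]
    have hflat : biprod.inl ≫ f.hom ≫ biprod.snd ≫ r = 𝟙 A := by
      rw [hs0] at hsr1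
      simpa only [Category.assoc] using hsr1
    have hf' : biprod.inl ≫ (f ≪≫ asIso ψ).hom ≫ biprod.fst = 𝟙 A := by
      simp only [Iso.trans_hom, asIso_hom]
      rw [Category.assoc, hψfst]
      simpa only [Category.assoc] using hflat
    haveI : IsIso (biprod.inl ≫ (f ≪≫ asIso ψ).hom ≫ biprod.fst) := by
      rw [hf']; infer_instance
    exact ⟨Biprod.isoElim (f ≪≫ asIso ψ)⟩

/-- Splitting off a retract as a biproduct summand. -/
theorem ks_retract_split [IsIdempotentComplete C] {A X : C} (s : A ⟶ X) (r : X ⟶ A)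
    (hsr : s ≫ r = 𝟙 A) :
    ∃ (D : C) (iD : D ⟶ X) (pD : X ⟶ D), iD ≫ pD = 𝟙 D ∧ pD ≫ iD = 𝟙 X - r ≫ s ∧
      Nonempty (X ≅ A ⊞ D) := by
  have hq : (𝟙 X - r ≫ s) ≫ (𝟙 X - r ≫ s) = 𝟙 X - r ≫ s := by
    have : (r ≫ s) ≫ r ≫ s = r ≫ s := by
      rw [Category.assoc r s, ← Category.assoc s r, hsr]; simp
    simp [Preadditive.sub_comp, Preadditive.comp_sub, this]
  obtain ⟨D, iD, pD, h1, h2⟩ := IsIdempotentComplete.idempotents_split X (𝟙 X - r ≫ s) hq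
  refine ⟨D, iD, pD, h1, h2, ⟨?_⟩⟩
  have hspD : s ≫ pD = 0 := by
    have h3 : s ≫ pD ≫ iD = 0 := by
      rw [h2, Preadditive.comp_sub, ← Category.assoc, hsr]; simp
    have := congrArg (fun g => g ≫ pD) h3
    simpa [Category.assoc, h1] using this
  have hiDr : iD ≫ r = 0 := by
    have h4 : iD ≫ (r ≫ s) = 0 := by
      have h5 : iD ≫ (𝟙 X - r ≫ s) = iD := by
        rw [← h2, ← Category.assoc, h1]; simp
      rw [Preadditive.comp_sub, Category.comp_id, sub_eq_self] at h5
      exact h5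
    have := congrArg (fun g => g ≫ r) h4
    simpa [Category.assoc, hsr] using this
  refine ⟨biprod.lift r pD, biprod.desc s iD, ?_, ?_⟩
  · rw [biprod.lift_desc, h2]; abel
  · apply biprod.hom_ext' <;> apply biprod.hom_ext <;>
      simp [hsr, h1, hspD, hiDr]

theorem ks_finrank_biprod_le {A D X : C} (φ : X ≅ A ⊞ D) :
    finrank k (A ⟶ A) + finrank k (D ⟶ D) ≤ finrank k (X ⟶ X) := by
  let Φ : ((A ⟶ A) × (D ⟶ D)) →ₗ[k] (X ⟶ X) :=
    { toFun := fun uv => φ.hom ≫ (biprod.fst ≫ uv.1 ≫ biprod.inl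
        + biprod.snd ≫ uv.2 ≫ biprod.inr) ≫ φ.inv
      map_add' := fun uv uv' => by
        simp [Preadditive.add_comp, Preadditive.comp_add]
        abel
      map_smul' := fun c uv => by
        simp [Linear.comp_smul, Linear.smul_comp, Preadditive.comp_add] }
  have hinj : Function.Injective Φ := by
    rw [injective_iff_map_eq_zero]
    intro uv h
    have h2 : biprod.fst ≫ uv.1 ≫ biprod.inl + biprod.snd ≫ uv.2 ≫ biprod.inr
        = (0 : A ⊞ D ⟶ A ⊞ D) := by
      have := congrArg (fun g => φ.inv ≫ g ≫ φ.hom) h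
      simpa [Φ, Category.assoc] using this
    have hu : uv.1 = 0 := by
      have := congrArg (fun g => biprod.inl ≫ g ≫ biprod.fst) h2
      simpa [Preadditive.add_comp, Preadditive.comp_add] using this
    have hv : uv.2 = 0 := by
      have := congrArg (fun g => biprod.inr ≫ g ≫ biprod.snd) h2
      simpa [Preadditive.add_comp, Preadditive.comp_add] using this
    exact Prod.ext hu hv
  have := LinearMap.finrank_le_finrank_of_injective hinj
  simpa [finrank_prod] using this

/-- If `𝟙 A = 0` then `A ⊞ B ≅ B`. -/
noncomputable def ksZeroIso {A B : C} (h : 𝟙 A = 0) : A ⊞ B ≅ B where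
  hom := biprod.snd
  inv := biprod.inr
  hom_inv_id := by
    apply biprod.hom_ext' <;> simp
    rw [show biprod.inl = (𝟙 A) ≫ (biprod.inl : A ⟶ A ⊞ B) from by simp, h]
    simp
  inv_hom_id := by simp

theorem ks_finrank_pos {A : C} (h : 𝟙 A ≠ 0) : 1 ≤ finrank k (A ⟶ A) := by
  haveI : Nontrivial (A ⟶ A) := ⟨𝟙 A, 0, h⟩
  exact Module.finrank_pos

/-- Main cancellation theorem, by induction on the dimension of `End A`. -/
theorem ks_cancel_dim [IsIdempotentComplete C] :
    ∀ (N : ℕ) (A B C' : C), finrank k (A ⟶ A) ≤ N → (A ⊞ B ≅ A ⊞ C') → Nonempty (B ≅ C') := by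
  intro N
  induction N using Nat.strong_induction_on with
  | _ N IH =>
    intro A B C' hA f
    by_cases h0 : 𝟙 A = 0
    · exact ⟨(ksZeroIso h0).symm ≪≫ f ≪≫ ksZeroIso h0⟩
    by_cases hid : ∀ e : A ⟶ A, e ≫ e = e → e = 0 ∨ e = 𝟙 A
    · exact ks_cancel_core (k := k) hid f
    · push_neg at hid
      obtain ⟨e, he, hne0, hne1⟩ := hid
      obtain ⟨A₁, i₁, p₁, hip, hpi⟩ := IsIdempotentComplete.idempotents_split A e he
      obtain ⟨A₂, iD, pD, hiD, hpD, ⟨φ⟩⟩ := ks_retract_split i₁ p₁ hip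
      have h1 : 𝟙 A₁ ≠ 0 := fun hz => hne0 (by
        rw [← hpi, show p₁ = p₁ ≫ 𝟙 A₁ from by simp, hz]; simp)
      have h2 : 𝟙 A₂ ≠ 0 := fun hz => hne1 (by
        have hz2 : pD ≫ iD = 0 := by rw [show pD = pD ≫ 𝟙 A₂ from by simp, hz]; simp
        rw [hz2] at hpD
        rw [← hpi]
        exact (sub_eq_zero.mp hpD.symm).symm)
      have hd := ks_finrank_biprod_le (k := k) φ
      have hd1 : finrank k (A₁ ⟶ A₁) < N :=
        lt_of_lt_of_le (by have := ks_finrank_pos (k := k) h2; omega) hA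
      have hd2 : finrank k (A₂ ⟶ A₂) < N :=
        lt_of_lt_of_le (by have := ks_finrank_pos (k := k) h1; omega) hA
      have g : A₁ ⊞ (A₂ ⊞ B) ≅ A₁ ⊞ (A₂ ⊞ C') :=
        (biprod.associator A₁ A₂ B).symm ≪≫ biprod.mapIso φ.symm (Iso.refl B) ≪≫ f
          ≪≫ biprod.mapIso φ (Iso.refl C') ≪≫ biprod.associator A₁ A₂ C'
      obtain ⟨g₂⟩ := IH _ hd1 A₁ (A₂ ⊞ B) (A₂ ⊞ C') le_rfl g
      exact IH _ hd2 A₂ B C' le_rfl g₂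

/-- Every nonzero object has a nonzero retract with no nontrivial idempotents. -/
theorem ks_good_retract [IsIdempotentComplete C] :
    ∀ (N : ℕ) (X : C), finrank k (X ⟶ X) ≤ N → 𝟙 X ≠ 0 →
      ∃ (A : C) (s : A ⟶ X) (r : X ⟶ A), s ≫ r = 𝟙 A ∧ 𝟙 A ≠ 0 ∧
        (∀ e : A ⟶ A, e ≫ e = e → e = 0 ∨ e = 𝟙 A) := by
  intro N
  induction N using Nat.strong_induction_on with
  | _ N IH =>
    intro X hX hX0
    by_cases hid : ∀ e : X ⟶ X, e ≫ e = e → e = 0 ∨ e = 𝟙 X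
    · exact ⟨X, 𝟙 X, 𝟙 X, by simp, hX0, hid⟩
    · push_neg at hid
      obtain ⟨e, he, hne0, hne1⟩ := hid
      obtain ⟨A₁, i₁, p₁, hip, hpi⟩ := IsIdempotentComplete.idempotents_split X e he
      obtain ⟨A₂, iD, pD, hiD, hpD, ⟨φ⟩⟩ := ks_retract_split i₁ p₁ hip
      have h1 : 𝟙 A₁ ≠ 0 := fun hz => hne0 (by
        rw [← hpi, show p₁ = p₁ ≫ 𝟙 A₁ from by simp, hz]; simp)
      have h2 : 𝟙 A₂ ≠ 0 := fun hz => hne1 (by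
        have hz2 : pD ≫ iD = 0 := by rw [show pD = pD ≫ 𝟙 A₂ from by simp, hz]; simp
        rw [hz2] at hpD
        rw [← hpi]
        exact (sub_eq_zero.mp hpD.symm).symm)
      have hd := ks_finrank_biprod_le (k := k) φ
      have hd1 : finrank k (A₁ ⟶ A₁) < N :=
        lt_of_lt_of_le (by have := ks_finrank_pos (k := k) h2; omega) hX
      obtain ⟨A, s, r, hsr, hA0, hAid⟩ := IH _ hd1 A₁ le_rfl h1
      exact ⟨A, s ≫ i₁, p₁ ≫ r, by
        rw [Category.assoc, ← Category.assoc i₁, hip, Category.id_comp, hsr], hA0, hAid⟩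

variable [HasFiniteBiproducts C]

/-- Distributivity of finite biproducts over binary biproducts. -/
noncomputable def ksDistrib (n : ℕ) (A D : C) :
    (⨁ fun _ : Fin n => (A ⊞ D)) ≅ (⨁ fun _ : Fin n => A) ⊞ (⨁ fun _ : Fin n => D) where
  hom := biprod.lift (biproduct.map fun _ => biprod.fst) (biproduct.map fun _ => biprod.snd)
  inv := biprod.desc (biproduct.map fun _ => biprod.inl) (biproduct.map fun _ => biprod.inr)
  hom_inv_id := by
    apply biproduct.hom_ext'
    intro j
    apply biproduct.hom_ext
    intro j'
    by_cases h : j = j'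
    · subst h
      simp [Preadditive.comp_add, Preadditive.add_comp, biprod.total]
    · simp [biproduct.ι_π_ne _ h, Preadditive.comp_add, Preadditive.add_comp, h]
  inv_hom_id := by
    apply biprod.hom_ext' <;> apply biprod.hom_ext <;>
      apply biproduct.hom_ext' <;> intro j <;> apply biproduct.hom_ext <;> intro j' <;>
      by_cases h : j = j' <;> first
        | (subst h; simp) | (simp [biproduct.ι_π_ne _ h, h])

include k in
/-- Cancellation of `n`-th powers. -/
theorem ks_pow_cancel [IsIdempotentComplete C] (n : ℕ) (hn : 1 ≤ n) :
    ∀ (N : ℕ) (B C' : C), finrank k (B ⟶ B) ≤ N →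
      ((⨁ fun _ : Fin n => B) ≅ ⨁ fun _ : Fin n => C') → Nonempty (B ≅ C') := by
  intro N
  induction N using Nat.strong_induction_on with
  | _ N IH =>
    intro B C' hB h
    have i0 : Fin n := ⟨0, hn⟩
    by_cases h0 : 𝟙 B = 0
    · have hBB : 𝟙 (⨁ fun _ : Fin n => B) = 0 := by
        rw [← biproduct.total]
        have hz : ∀ j : Fin n, biproduct.π (fun _ : Fin n => B) j
            ≫ biproduct.ι (fun _ : Fin n => B) j
            = (0 : (⨁ fun _ : Fin n => B) ⟶ _) := fun j => by
          rw [show biproduct.ι (fun _ : Fin n => B) j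
            = 𝟙 B ≫ biproduct.ι (fun _ : Fin n => B) j from by simp, h0]
          simp
        simp [hz]
      have hC0 : 𝟙 C' = 0 := by
        calc 𝟙 C' = biproduct.ι (fun _ : Fin n => C') i0 ≫ h.inv
              ≫ (𝟙 (⨁ fun _ : Fin n => B)) ≫ h.hom ≫ biproduct.π (fun _ : Fin n => C') i0 := by
                simp
          _ = 0 := by rw [hBB]; simp
      exact ⟨⟨0, 0, by simpa using h0.symm, by simpa using hC0.symm⟩⟩
    · obtain ⟨A, sA, rA, hsr, hA0, hAid⟩ :=
        ks_good_retract (k := k) (finrank k (B ⟶ B)) B le_rfl h0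
      set σ : A ⟶ ⨁ fun _ : Fin n => C' := sA ≫ biproduct.ι (fun _ : Fin n => B) i0 ≫ h.hom
        with hσ
      set ρ : (⨁ fun _ : Fin n => C') ⟶ A := h.inv ≫ biproduct.π (fun _ : Fin n => B) i0 ≫ rA
        with hρ
      have hσρ : σ ≫ ρ = 𝟙 A := by
        rw [hσ, hρ]
        simp [hsr]
      have hsum : ∑ j : Fin n, σ ≫ biproduct.π (fun _ : Fin n => C') j
          ≫ biproduct.ι (fun _ : Fin n => C') j ≫ ρ = 𝟙 A := by
        have e1 : ∀ j : Fin n, σ ≫ biproduct.π (fun _ : Fin n => C') j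
            ≫ biproduct.ι (fun _ : Fin n => C') j ≫ ρ
            = (σ ≫ (biproduct.π (fun _ : Fin n => C') j
                ≫ biproduct.ι (fun _ : Fin n => C') j)) ≫ ρ := fun j => by
          simp only [Category.assoc]
        rw [Finset.sum_congr rfl (fun j _ => e1 j), ← Preadditive.sum_comp,
          ← Preadditive.comp_sum, biproduct.total, Category.comp_id, hσρ]
      haveI : Nontrivial (End A) := ⟨ksEnd (𝟙 A), ksEnd 0, fun hh => hA0 (by exact hh)⟩
      have hdi : ∀ a : End A, IsUnit a ∨ IsNilpotent a := fun a =>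
        ks_fitting k a (fun e he => hAid e he)
      obtain ⟨j, _, hj⟩ := ks_sum_isUnit hdi
        (fun j => ksEnd (σ ≫ biproduct.π (fun _ : Fin n => C') j
          ≫ biproduct.ι (fun _ : Fin n => C') j ≫ ρ))
        Finset.univ (by
          have e2 : (∑ j ∈ Finset.univ,
              ksEnd (σ ≫ biproduct.π (fun _ : Fin n => C') j
                ≫ biproduct.ι (fun _ : Fin n => C') j ≫ ρ))
              = ksEnd (𝟙 A) := hsum
          rw [e2]; exact isUnit_one)
      haveI hIso : IsIso (σ ≫ biproduct.π (fun _ : Fin n => C') j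
          ≫ biproduct.ι (fun _ : Fin n => C') j ≫ ρ) :=
        ks_isIso_of_isUnit hj
      set s1 : A ⟶ C' := σ ≫ biproduct.π (fun _ : Fin n => C') j with hs1
      set r1 : C' ⟶ A := (biproduct.ι (fun _ : Fin n => C') j ≫ ρ)
        ≫ inv (σ ≫ biproduct.π (fun _ : Fin n => C') j
          ≫ biproduct.ι (fun _ : Fin n => C') j ≫ ρ) with hr1
      have hs1r1 : s1 ≫ r1 = 𝟙 A := by
        have e3 : s1 ≫ r1 = (σ ≫ biproduct.π (fun _ : Fin n => C') j
              ≫ biproduct.ι (fun _ : Fin n => C') j ≫ ρ)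
            ≫ inv (σ ≫ biproduct.π (fun _ : Fin n => C') j
              ≫ biproduct.ι (fun _ : Fin n => C') j ≫ ρ) := by
          rw [hs1, hr1]; simp only [Category.assoc]
        rw [e3, IsIso.hom_inv_id]
      obtain ⟨B₂, _, _, _, _, ⟨φB⟩⟩ := ks_retract_split sA rA hsr
      obtain ⟨C₂, _, _, _, _, ⟨φC⟩⟩ := ks_retract_split s1 r1 hs1r1
      have hbig : (⨁ fun _ : Fin n => A) ⊞ (⨁ fun _ : Fin n => B₂)
          ≅ (⨁ fun _ : Fin n => A) ⊞ (⨁ fun _ : Fin n => C₂) :=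
        (ksDistrib n A B₂).symm ≪≫ (biproduct.mapIso fun _ => φB.symm) ≪≫ h
          ≪≫ (biproduct.mapIso fun _ => φC) ≪≫ ksDistrib n A C₂
      obtain ⟨h₂⟩ := ks_cancel_dim (k := k)
        (finrank k ((⨁ fun _ : Fin n => A) ⟶ ⨁ fun _ : Fin n => A)) _ _ _ le_rfl hbig
      have hd := ks_finrank_biprod_le (k := k) φB
      have hlt : finrank k (B₂ ⟶ B₂) < N :=
        lt_of_lt_of_le (by have := ks_finrank_pos (k := k) hA0; omega) hB
      obtain ⟨hBC⟩ := IH _ hlt B₂ C₂ le_rfl h₂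
      exact ⟨φB ≪≫ biprod.mapIso (Iso.refl A) hBC ≪≫ φC.symm⟩

end CatLayer

theorem krull_schmidt_cancellation
    {k : Type*} [Field k] {C : Type*} [Category C] [Preadditive C] [Linear k C]
    [HasFiniteBiproducts C] [HasBinaryBiproducts C]
    [IsIdempotentComplete C]
    [∀ X Y : C, FiniteDimensional k (X ⟶ Y)]
    (A B C' : C) :
    (Nonempty (A ⊞ B ≅ A ⊞ C') → Nonempty (B ≅ C')) ∧
    (∀ n : ℕ, 1 ≤ n →
      Nonempty ((⨁ fun _ : Fin n => B) ≅ ⨁ fun _ : Fin n => C') → Nonempty (B ≅ C')) := by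
  constructor
  · rintro ⟨f⟩
    exact ks_cancel_dim (k := k) (finrank k (A ⟶ A)) A B C' le_rfl f
  · rintro n hn ⟨h⟩
    exact ks_pow_cancel (k := k) n hn (finrank k (B ⟶ B)) B C' le_rfl h
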